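/- The function h₁(x) = (sin(x)/x - cos²(x)) / sin²(x) tends to 5/6 as x → 0⁺ and tends to -∞ as x → π⁻. -/

import Mathlib

open Real Filter Topology

lemma sin_sub_div_cube : Tendsto (fun x : ℝ => (Real.sin x - x) / x ^ 3)
    (nhdsWithin 0 (Set.Ioi 0)) (nhds (-(1 / 6))) := by
  rw [show (-(1/6) : ℝ) = 0 + -(1/6) by ring, ← tendsto_sub_nhds_zero_iff]
  apply squeeze_zero_norm' (a := fun x : ℝ => x * (5 / 96))
  · filter_upwards [Ioo_mem_nhdsGT_of_mem (by norm_num : (0:ℝ) ∈ Set.Ico 0 1)] with x hx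
    obtain ⟨hx0, hx1⟩ := hx
    have hx3 : (0:ℝ) < x ^ 3 := by positivity
    have habs : |x| ≤ 1 := by rw [abs_of_pos hx0]; linarith
    have hb := Real.sin_bound habs
    have : (Real.sin x - x) / x ^ 3 - -(1/6) = (Real.sin x - (x - x ^ 3 / 6)) / x ^ 3 := by
      field_simp; ring
    rw [Real.norm_eq_abs, zero_add, this, abs_div, abs_of_pos hx3, div_le_iff₀ hx3]
    calc |Real.sin x - (x - x ^ 3 / 6)| ≤ |x| ^ 4 * (5 / 96) :=
        hb.trans (by rw [pow_succ]; nlinarith [pow_nonneg (abs_nonneg x) 4, abs_nonneg x])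
      _ = x * (5/96) * x ^ 3 := by rw [abs_of_pos hx0]; ring
  · have : Tendsto (fun x : ℝ => x * (5/96)) (nhds 0) (nhds (0 * (5/96))) :=
      (continuous_id.mul continuous_const).tendsto 0
    rw [zero_mul] at this
    exact this.mono_left nhdsWithin_le_nhds

lemma sin_div_self : Tendsto (fun x : ℝ => Real.sin x / x)
    (nhdsWithin 0 (Set.Ioi 0)) (nhds 1) := by
  have h := (Real.hasDerivAt_sin 0)
  rw [hasDerivAt_iff_tendsto_slope] at h
  rw [Real.cos_zero] at h
  have h2 := h.mono_left (nhdsWithin_mono 0 (fun x hx => by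
    simp only [Set.mem_compl_iff, Set.mem_singleton_iff]; exact ne_of_gt hx))
  refine h2.congr (fun x => ?_)
  simp [slope, Real.sin_zero, div_eq_inv_mul]

theorem h1_limits :
    Tendsto (fun x : ℝ => (Real.sin x / x - Real.cos x ^ 2) / Real.sin x ^ 2)
        (nhdsWithin 0 (Set.Ioi 0)) (nhds (5 / 6)) ∧
      Tendsto (fun x : ℝ => (Real.sin x / x - Real.cos x ^ 2) / Real.sin x ^ 2)
        (nhdsWithin Real.pi (Set.Iio Real.pi)) atBot := by
  constructor
  · have key : Tendsto (fun x : ℝ => (Real.sin x - x) / x ^ 3 * ((Real.sin x / x)⁻¹) ^ 2 + 1)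
        (nhdsWithin 0 (Set.Ioi 0)) (nhds (-(1/6) * (1⁻¹) ^ 2 + 1)) :=
      ((sin_sub_div_cube.mul ((sin_div_self.inv₀ one_ne_zero).pow 2)).add tendsto_const_nhds)
    rw [show (-(1/6 : ℝ) * (1⁻¹) ^ 2 + 1) = 5 / 6 by norm_num] at key
    refine key.congr' ?_ |>.mono_left le_rfl
    filter_upwards [Ioo_mem_nhdsGT_of_mem (Set.left_mem_Ico.2 Real.pi_pos)] with x hx
    have hx0 : x ≠ 0 := ne_of_gt hx.1
    have hs : Real.sin x ≠ 0 := ne_of_gt (Real.sin_pos_of_pos_of_lt_pi hx.1 hx.2)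
    have hc : Real.cos x ^ 2 = 1 - Real.sin x ^ 2 := by
      rw [← Real.sin_sq_add_cos_sq x]; ring
    rw [hc]
    field_simp
    ring
  · have hnum : Tendsto (fun x : ℝ => Real.sin x / x - Real.cos x ^ 2)
        (nhdsWithin Real.pi (Set.Iio Real.pi)) (nhds (-1)) := by
      have : ContinuousAt (fun x : ℝ => Real.sin x / x - Real.cos x ^ 2) Real.pi := by
        exact (Real.continuous_sin.continuousAt.div continuousAt_id
          (ne_of_gt Real.pi_pos)).sub ((Real.continuous_cos.continuousAt).pow 2)
      have h : Tendsto (fun x : ℝ => Real.sin x / x - Real.cos x ^ 2)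
          (nhdsWithin Real.pi (Set.Iio Real.pi)) (nhds (Real.sin Real.pi / Real.pi - Real.cos Real.pi ^ 2)) :=
        this.tendsto.mono_left nhdsWithin_le_nhds
      simpa [Real.sin_pi, Real.cos_pi] using h
    have hden : Tendsto (fun x : ℝ => Real.sin x ^ 2)
        (nhdsWithin Real.pi (Set.Iio Real.pi)) (nhdsWithin 0 (Set.Ioi 0)) := by
      rw [tendsto_nhdsWithin_iff]
      constructor
      · have : ContinuousAt (fun x : ℝ => Real.sin x ^ 2) Real.pi :=
          (Real.continuous_sin.continuousAt).pow 2
        have h : Tendsto (fun x : ℝ => Real.sin x ^ 2)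
            (nhdsWithin Real.pi (Set.Iio Real.pi)) (nhds (Real.sin Real.pi ^ 2)) :=
          this.tendsto.mono_left nhdsWithin_le_nhds
        simpa [Real.sin_pi] using h
      · filter_upwards [Ioo_mem_nhdsLT_of_mem (Set.right_mem_Ioc.2 Real.pi_pos)] with x hx
        have := Real.sin_pos_of_pos_of_lt_pi hx.1 hx.2
        simp only [Set.mem_Ioi]
        positivity
    have := Tendsto.neg_mul_atTop (by norm_num : (-1:ℝ) < 0) hnum
      (tendsto_inv_nhdsGT_zero.comp hden)
    simpa [div_eq_mul_inv] using this
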